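/- A function f : S^{3×3} → ℝ is symmetric polyconvex if and only if there exists a convex function g : S^{3×3} × S^{3×3} → ℝ such that (1) for all ε, η ∈ S^{3×3}, every matrix B ∈ S^{3×3} satisfying g(ε, η̃) ≥ g(ε, η) + B:(η̃ − η) for all η̃ ∈ S^{3×3} is negative semi-definite, and (2) f(ε) = g(ε, cof ε) for all ε ∈ S^{3×3}. -/

import Mathlib

open Matrix

/-- The symmetric part `(F + Fᵀ)/2` of a 3×3 matrix. -/
noncomputable def symPart (F : Matrix (Fin 3) (Fin 3) ℝ) : Matrix (Fin 3) (Fin 3) ℝ :=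
  (1 / 2 : ℝ) • (F + Fᵀ)

/-- The cofactor matrix: `(cof F)_{ij} = (-1)^{i+j}` times the determinant of the 2×2
matrix obtained from `F` by deleting row `i` and column `j`. -/
noncomputable def cof (F : Matrix (Fin 3) (Fin 3) ℝ) : Matrix (Fin 3) (Fin 3) ℝ :=
  Matrix.of fun i j =>
    (-1 : ℝ) ^ ((i : ℕ) + (j : ℕ)) * (F.submatrix i.succAbove j.succAbove).det

/-- Frobenius inner product `A:B = Σ_{i,j} A_{ij} B_{ij}` of 3×3 matrices. -/
def mdot (A B : Matrix (Fin 3) (Fin 3) ℝ) : ℝ := ∑ i, ∑ j, A i j * B i j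

/-- A function `W : ℝ^{3×3} → ℝ` is polyconvex if there is a convex function
`G : ℝ^{3×3} × ℝ^{3×3} × ℝ → ℝ` with `W F = G (F, cof F, det F)` for all `F`. -/
def Polyconvex3 (W : Matrix (Fin 3) (Fin 3) ℝ → ℝ) : Prop :=
  ∃ G : Matrix (Fin 3) (Fin 3) ℝ × Matrix (Fin 3) (Fin 3) ℝ × ℝ → ℝ,
    ConvexOn ℝ Set.univ G ∧ ∀ F : Matrix (Fin 3) (Fin 3) ℝ, W F = G (F, cof F, F.det)

/-- `f : S^{3×3} → ℝ` is symmetric polyconvex if `F ↦ f (Fˢ)` is polyconvex. -/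
def SymPolyconvex3 (f : Matrix (Fin 3) (Fin 3) ℝ → ℝ) : Prop :=
  Polyconvex3 (fun F => f (symPart F))

/-- `B ∈ S^{3×3}` is negative semi-definite: `Bx·x ≤ 0` for all `x ∈ ℝ³`. -/
def NegSemidefM (B : Matrix (Fin 3) (Fin 3) ℝ) : Prop :=
  ∀ x : Fin 3 → ℝ, B.mulVec x ⬝ᵥ x ≤ 0

/-- `A ∈ S^{3×3}` is positive semi-definite: `Ax·x ≥ 0` for all `x ∈ ℝ³`. -/
def PosSemidefM (A : Matrix (Fin 3) (Fin 3) ℝ) : Prop :=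
  ∀ x : Fin 3 → ℝ, 0 ≤ A.mulVec x ⬝ᵥ x

/-- The symmetrized tensor product `a ⊙ b = (a⊗b + b⊗a)/2`. -/
noncomputable def symProd (a b : Fin 3 → ℝ) : Matrix (Fin 3) (Fin 3) ℝ :=
  (1 / 2 : ℝ) • (vecMulVec a b + vecMulVec b a)

/-- `f : S^{3×3} → ℝ` is symmetric rank-one convex if `t ↦ f (ε + t a⊙b)` is convex
for every symmetric `ε` and all `a, b ∈ ℝ³`. -/
def SymRankOneConvex3 (f : Matrix (Fin 3) (Fin 3) ℝ → ℝ) : Prop :=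
  ∀ ε : Matrix (Fin 3) (Fin 3) ℝ, ε.IsSymm → ∀ a b : Fin 3 → ℝ,
    ConvexOn ℝ Set.univ (fun t : ℝ => f (ε + t • symProd a b))

set_option maxHeartbeats 1600000

abbrev M3 := Matrix (Fin 3) (Fin 3) ℝ

noncomputable instance : NormedAddCommGroup M3 := Matrix.normedAddCommGroup
noncomputable instance : NormedSpace ℝ M3 := Matrix.normedSpace

/-- skew matrix of a vector -/
noncomputable def skw (w : Fin 3 → ℝ) : M3 := !![0, -w 2, w 1; w 2, 0, -w 0; -w 1, w 0, 0]
/-- axial vector of the skew part -/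
noncomputable def wv (F : M3) : Fin 3 → ℝ :=
  ![(F 2 1 - F 1 2)/2, (F 0 2 - F 2 0)/2, (F 1 0 - F 0 1)/2]

lemma symm_entry {A : M3} (h : A.IsSymm) (i j : Fin 3) : A j i = A i j :=
  congrFun (congrFun h i) j
-- ===== ring identities for cof =====
lemma cof_symPart (F : M3) :
    cof (symPart F) = symPart (cof F) - vecMulVec (wv F) (wv F) := by
  ext i j
  fin_cases i <;> fin_cases j <;>
    simp [cof, symPart, wv, vecMulVec, Matrix.det_fin_two, Fin.succAbove] <;> ring

lemma cof_cof (N : M3) : cof (cof N) = N.det • N := by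
  ext i j
  fin_cases i <;> fin_cases j <;>
    simp [cof, Matrix.det_fin_two, Matrix.det_fin_three, Fin.succAbove] <;> ring

lemma cof_smul (c : ℝ) (X : M3) : cof (c • X) = (c^2) • cof X := by
  ext i j
  fin_cases i <;> fin_cases j <;>
    simp [cof, Matrix.det_fin_two, Fin.succAbove] <;> ring

lemma cof_pair (X Y : M3) (c : ℝ) :
    cof (X + c • Y) + cof (X - c • Y) = (2:ℝ) • cof X + (2*c^2) • cof Y := by
  ext i j
  fin_cases i <;> fin_cases j <;>
    simp [cof, Matrix.det_fin_two, Fin.succAbove] <;> ring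

lemma cof_transpose (F : M3) : cof Fᵀ = (cof F)ᵀ := by
  ext i j
  fin_cases i <;> fin_cases j <;>
    simp [cof, Matrix.det_fin_two, Fin.succAbove] <;> ring

lemma cof_sI_skw (s : ℝ) (w : Fin 3 → ℝ) :
    cof (s • (1:M3) + skw w) = (s^2) • (1:M3) + vecMulVec w w + s • skw w := by
  ext i j
  fin_cases i <;> fin_cases j <;>
    simp [cof, skw, vecMulVec, Matrix.det_fin_two, Matrix.one_apply, Fin.succAbove] <;> ring

lemma det_sI_skw (s : ℝ) (w : Fin 3 → ℝ) :
    (s • (1:M3) + skw w).det = s^3 + s * (w 0^2 + w 1^2 + w 2^2) := by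
  simp [Matrix.det_fin_three, skw, Matrix.one_apply]; ring

-- ===== mdot lemmas =====
lemma mdot_expand (A B : M3) : mdot A B =
    A 0 0 * B 0 0 + A 0 1 * B 0 1 + A 0 2 * B 0 2 +
    A 1 0 * B 1 0 + A 1 1 * B 1 1 + A 1 2 * B 1 2 +
    A 2 0 * B 2 0 + A 2 1 * B 2 1 + A 2 2 * B 2 2 := by
  simp [mdot, Fin.sum_univ_three]; ring

lemma mdot_add_right (A X Y : M3) : mdot A (X + Y) = mdot A X + mdot A Y := by
  simp [mdot_expand]; ring
lemma mdot_sub_right (A X Y : M3) : mdot A (X - Y) = mdot A X - mdot A Y := by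
  simp [mdot_expand]; ring
lemma mdot_neg_right (A X : M3) : mdot A (-X) = - mdot A X := by
  simp [mdot_expand]; ring
lemma mdot_smul_right (A : M3) (c : ℝ) (X : M3) : mdot A (c • X) = c * mdot A X := by
  simp [mdot_expand]; ring
lemma mdot_transpose (A X : M3) : mdot A Xᵀ = mdot Aᵀ X := by
  simp [mdot_expand]; ring
lemma mdot_symPart (A X : M3) : mdot (symPart A) X = (1/2) * (mdot A X + mdot Aᵀ X) := by
  simp [mdot_expand, symPart]; ring
lemma mdot_symPart_of_isSymm (A : M3) {X : M3} (hX : X.IsSymm) :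
    mdot (symPart A) X = mdot A X := by
  simp only [mdot_expand, symPart, Matrix.smul_apply, Matrix.add_apply, Matrix.transpose_apply,
    smul_eq_mul]
  rw [symm_entry hX 0 1, symm_entry hX 0 2, symm_entry hX 1 2]
  ring
lemma mdot_skw_of_isSymm {A : M3} (hA : A.IsSymm) (u : Fin 3 → ℝ) : mdot A (skw u) = 0 := by
  simp only [mdot_expand, skw]
  simp
  linear_combination (u 2) * symm_entry hA 0 1 - (u 1) * symm_entry hA 0 2 +
    (u 0) * symm_entry hA 1 2
lemma mdot_vecMulVec (B : M3) (x : Fin 3 → ℝ) :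
    mdot B (vecMulVec x x) = B.mulVec x ⬝ᵥ x := by
  simp [mdot_expand, vecMulVec, Matrix.mulVec, dotProduct, Fin.sum_univ_three]; ring
lemma mdot_one (B : M3) : mdot B 1 = B 0 0 + B 1 1 + B 2 2 := by
  simp [mdot_expand, Matrix.one_apply]

-- ===== symPart / symmetry lemmas =====
lemma symPart_isSymm (F : M3) : (symPart F).IsSymm := by
  unfold Matrix.IsSymm symPart
  ext i j
  simp [Matrix.transpose_apply]
  ring
lemma symPart_of_isSymm {F : M3} (h : F.IsSymm) : symPart F = F := by
  unfold symPart; rw [Matrix.IsSymm] at h; rw [h]; ext i j; simp; ring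
lemma symPart_transpose (F : M3) : symPart Fᵀ = symPart F := by
  unfold symPart; rw [Matrix.transpose_transpose]; ext i j; simp; ring
lemma symPart_linear (a b : ℝ) (X Y : M3) :
    symPart (a • X + b • Y) = a • symPart X + b • symPart Y := by
  unfold symPart; ext i j; simp; ring
lemma skw_transpose (u : Fin 3 → ℝ) : (skw u)ᵀ = -skw u := by
  unfold skw; ext i j; fin_cases i <;> fin_cases j <;> simp
lemma symPart_sI_skw (s : ℝ) (u : Fin 3 → ℝ) : symPart (s • (1:M3) + skw u) = s • (1:M3) := by
  unfold symPart
  rw [Matrix.transpose_add, Matrix.transpose_smul, Matrix.transpose_one, skw_transpose]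
  ext i j
  simp only [Matrix.add_apply, Matrix.smul_apply, Matrix.neg_apply, smul_eq_mul]
  ring
lemma isSymm_add {X Y : M3} (hX : X.IsSymm) (hY : Y.IsSymm) : (X + Y).IsSymm := by
  unfold Matrix.IsSymm at *; rw [Matrix.transpose_add, hX, hY]
lemma isSymm_sub {X Y : M3} (hX : X.IsSymm) (hY : Y.IsSymm) : (X - Y).IsSymm := by
  unfold Matrix.IsSymm at *; rw [Matrix.transpose_sub, hX, hY]
lemma isSymm_smul (c : ℝ) {X : M3} (hX : X.IsSymm) : (c • X).IsSymm := by
  unfold Matrix.IsSymm at *; rw [Matrix.transpose_smul, hX]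
lemma isSymm_vecMulVec (x : Fin 3 → ℝ) : (vecMulVec x x).IsSymm := by
  unfold Matrix.IsSymm; ext i j; simp [vecMulVec]; ring
lemma isSymm_cof {N : M3} (hN : N.IsSymm) : (cof N).IsSymm := by
  unfold Matrix.IsSymm; rw [← cof_transpose]; rw [Matrix.IsSymm] at hN; rw [hN]
lemma vmv_smul (t : ℝ) (w : Fin 3 → ℝ) :
    vecMulVec (t • w) (t • w) = (t^2) • vecMulVec w w := by
  ext i j; simp [vecMulVec]; ring
lemma vmv_combo (a : ℝ) (w₁ w₂ : Fin 3 → ℝ) :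
    vecMulVec (a • w₁ + (1-a) • w₂) (a • w₁ + (1-a) • w₂) =
      a • vecMulVec w₁ w₁ + (1-a) • vecMulVec w₂ w₂
        - (a*(1-a)) • vecMulVec (w₁ - w₂) (w₁ - w₂) := by
  ext i j; simp [vecMulVec]; ring
lemma wv_linear (a b : ℝ) (X Y : M3) : wv (a • X + b • Y) = a • wv X + b • wv Y := by
  funext i; fin_cases i <;> simp [wv] <;> ring

-- ===== scalar lemmas =====
lemma sl1 {a b K : ℝ} (h : ∀ t : ℝ, a * t^2 + b ≤ K) : a ≤ 0 := by
  by_contra hpos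
  push_neg at hpos
  have hb : b ≤ K := by have := h 0; linarith
  have ht := h (Real.sqrt ((K - b + 1)/a))
  have hnn : 0 ≤ (K - b + 1)/a := div_nonneg (by linarith) hpos.le
  rw [Real.sq_sqrt hnn] at ht
  rw [mul_div_cancel₀ _ (ne_of_gt hpos)] at ht
  linarith
lemma sl2 {b c : ℝ} (h : ∀ s : ℝ, b + c * s ≤ 0) : c = 0 := by
  by_contra hc
  have := h ((1 - b)/c)
  rw [mul_div_cancel₀ _ hc] at this
  linarith
lemma cubic_pos (q2 q1 q0 : ℝ) : ∃ t : ℝ, 1 ≤ t ∧ 0 < t^3 + q2*t^2 + q1*t + q0 := by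
  have ha2 := abs_nonneg q2
  have ha1 := abs_nonneg q1
  have ha0 := abs_nonneg q0
  refine ⟨1 + |q2| + |q1| + |q0|, by linarith, ?_⟩
  set t := 1 + |q2| + |q1| + |q0| with ht
  have h1 : 1 ≤ t := by linarith
  have htt : t ≤ t^2 := by nlinarith
  have h11 : (1:ℝ) ≤ t^2 := by nlinarith
  have e2 : q2*t^2 ≥ -(|q2| * t^2) := by nlinarith [neg_abs_le q2, sq_nonneg t]
  have e1 : q1*t ≥ -(|q1| * t^2) := by nlinarith [neg_abs_le q1]
  have e0 : q0 ≥ -(|q0| * t^2) := by nlinarith [neg_abs_le q0]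
  nlinarith [e2, e1, e0, h11, sq_nonneg t]
lemma exists_pd (M : M3) : ∃ t : ℝ, 1 ≤ t ∧ 0 < (M + t • (1:M3)).det := by
  obtain ⟨t, ht1, htp⟩ := cubic_pos (M 0 0 + M 1 1 + M 2 2)
    ((M 0 0 * M 1 1 - M 0 1 * M 1 0) + (M 0 0 * M 2 2 - M 0 2 * M 2 0)
      + (M 1 1 * M 2 2 - M 1 2 * M 2 1))
    (M 0 0*(M 1 1*M 2 2 - M 1 2*M 2 1) - M 0 1*(M 1 0*M 2 2 - M 1 2*M 2 0)
      + M 0 2*(M 1 0*M 2 1 - M 1 1*M 2 0))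
  refine ⟨t, ht1, ?_⟩
  have hd : (M + t • (1:M3)).det = t^3 + (M 0 0 + M 1 1 + M 2 2)*t^2
      + ((M 0 0 * M 1 1 - M 0 1 * M 1 0) + (M 0 0 * M 2 2 - M 0 2 * M 2 0)
        + (M 1 1 * M 2 2 - M 1 2 * M 2 1))*t
      + (M 0 0*(M 1 1*M 2 2 - M 1 2*M 2 1) - M 0 1*(M 1 0*M 2 2 - M 1 2*M 2 0)
        + M 0 2*(M 1 0*M 2 1 - M 1 1*M 2 0)) := by
    simp [Matrix.det_fin_three, Matrix.one_apply]
    ring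
  rw [hd]; exact htp

-- Ti matrices
noncomputable def TT : Fin 3 → M3 :=
  ![!![0,0,0;0,0,1;0,1,0], !![0,0,1;0,0,0;1,0,0], !![0,1,0;1,0,0;0,0,0]]
lemma TT_isSymm (i : Fin 3) : (TT i).IsSymm := by
  unfold Matrix.IsSymm
  fin_cases i <;> (ext a b; fin_cases a <;> fin_cases b <;> simp [TT, Matrix.vecHead, Matrix.vecTail])
lemma sum_cof_TT : cof (TT 0) + cof (TT 1) + cof (TT 2) = -(1:M3) := by
  ext i j
  fin_cases i <;> fin_cases j <;>
    simp [TT, cof, Matrix.det_fin_two, Matrix.one_apply, Fin.succAbove,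
      Matrix.vecHead, Matrix.vecTail] <;> norm_num
-- ===== subgradient existence =====
lemma exists_subgrad {E : Type*} [NormedAddCommGroup E] [NormedSpace ℝ E]
    [FiniteDimensional ℝ E] {G : E → ℝ} (hG : ConvexOn ℝ Set.univ G) (x₀ : E) :
    ∃ φ : E →L[ℝ] ℝ, ∀ x, G x₀ + φ (x - x₀) ≤ G x := by
  have hc : Continuous G := by
    rw [← continuousOn_univ]
    exact ConvexOn.continuousOn isOpen_univ hG
  set S : Set (E × ℝ) := {p | G p.1 < p.2} with hS
  have hopen : IsOpen S := isOpen_lt (hc.comp continuous_fst) continuous_snd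
  have hconv : Convex ℝ S := by
    intro p hp q hq a b ha hb hab
    simp only [hS, Set.mem_setOf_eq] at *
    have h1 : G (a • p.1 + b • q.1) ≤ a * G p.1 + b * G q.1 := by
      have := hG.2 (Set.mem_univ p.1) (Set.mem_univ q.1) ha hb hab
      simpa [smul_eq_mul] using this
    have h2 : a * G p.1 + b * G q.1 < a * p.2 + b * q.2 := by
      rcases eq_or_lt_of_le ha with h | h
      · have hb1 : b = 1 := by linarith
        simp [← h, hb1]; exact hq
      · exact add_lt_add_of_lt_of_le (mul_lt_mul_of_pos_left hp h)
          (mul_le_mul_of_nonneg_left hq.le hb)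
    exact lt_of_le_of_lt h1 h2
  have hx0 : (x₀, G x₀) ∉ S := by simp [hS]
  obtain ⟨φ₀, hφ₀⟩ := geometric_hahn_banach_open_point hconv hopen hx0
  have hsplit : ∀ (x : E) (t : ℝ), φ₀ (x, t) = φ₀ (x, 0) + t * φ₀ (0, 1) := by
    intro x t
    have : ((x, t) : E × ℝ) = (x, 0) + t • ((0 : E), (1 : ℝ)) := by
      simp [Prod.ext_iff]
    rw [this, map_add, φ₀.map_smul, smul_eq_mul]
  set α := φ₀ ((0 : E), (1 : ℝ)) with hα
  have hαneg : α < 0 := by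
    have h := hφ₀ (x₀, G x₀ + 1) (by simp [hS])
    rw [hsplit x₀ (G x₀ + 1), hsplit x₀ (G x₀)] at h
    linarith
  have main : ∀ x, φ₀ (x, 0) + G x * α ≤ φ₀ (x₀, 0) + G x₀ * α := by
    intro x
    by_contra hlt
    push_neg at hlt
    set L := φ₀ (x, 0) + G x * α
    set R := φ₀ (x₀, 0) + G x₀ * α
    set δ := (L - R) / (-α) with hδ
    have hδpos : 0 < δ := div_pos (by linarith) (by linarith)
    have h := hφ₀ (x, G x + δ) (by simp [hS]; linarith)
    rw [hsplit x (G x + δ), hsplit x₀ (G x₀)] at h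
    have hαne : α ≠ 0 := ne_of_lt hαneg
    have hδα : δ * α = -(L - R) := by
      rw [hδ, div_mul_eq_mul_div, div_eq_iff (neg_ne_zero.mpr hαne)]; ring
    have hexp : (G x + δ) * α = G x * α + δ * α := by ring
    rw [hexp] at h
    have hLdef : L = φ₀ (x, 0) + G x * α := rfl
    have hRdef : R = φ₀ (x₀, 0) + G x₀ * α := rfl
    linarith [h, hδα]
  refine ⟨(-α)⁻¹ • ((φ₀.comp (ContinuousLinearMap.inl ℝ E ℝ))), ?_⟩
  intro x
  have hx := main x
  have hβ : (0:ℝ) < -α := by linarith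
  simp only [ContinuousLinearMap.smul_apply, ContinuousLinearMap.coe_comp', Function.comp_apply,
    ContinuousLinearMap.inl_apply, smul_eq_mul, map_sub]
  have key : φ₀ (x, 0) - φ₀ (x₀, 0) ≤ (G x - G x₀) * (-α) := by nlinarith
  have h2 := mul_le_mul_of_nonneg_left key (inv_nonneg.mpr hβ.le)
  have h3 : (-α)⁻¹ * ((G x - G x₀) * (-α)) = G x - G x₀ := by
    rw [mul_comm ((-α)⁻¹), mul_assoc, mul_inv_cancel₀ (ne_of_gt hβ), mul_one]
  rw [h3, mul_sub] at h2
  linarith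

-- ===== representation of linear functionals on M3 =====
lemma lin_eq_mdot (ψ : M3 → ℝ) (hadd : ∀ X Y, ψ (X + Y) = ψ X + ψ Y)
    (hsmul : ∀ (c : ℝ) (X : M3), ψ (c • X) = c * ψ X) (X : M3) :
    ψ X = mdot (Matrix.of fun i j => ψ (Matrix.single i j 1)) X := by
  have hones : ∀ i j : Fin 3, Matrix.single i j (X i j)
      = (X i j) • Matrix.single i j (1:ℝ) := by
    intro i j
    rw [Matrix.smul_single, smul_eq_mul, mul_one]
  have hdecomp : X = ∑ i : Fin 3, ∑ j : Fin 3, (X i j) • Matrix.single i j (1:ℝ) := by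
    calc X = ∑ i : Fin 3, ∑ j : Fin 3, Matrix.single i j (X i j) :=
          Matrix.matrix_eq_sum_single X
    _ = _ := by simp only [hones]
  have hsum : ∀ (n : ℕ) (g : Fin n → M3), ψ (∑ i, g i) = ∑ i, ψ (g i) := by
    intro n
    induction n with
    | zero => intro g; simp [show ψ 0 = 0 by simpa using hsmul 0 0]
    | succ m ih =>
        intro g
        rw [Fin.sum_univ_succ, hadd, ih, Fin.sum_univ_succ]
  conv_lhs => rw [hdecomp]
  rw [hsum]
  have : ∀ i : Fin 3, ψ (∑ j : Fin 3, (X i j) • Matrix.single i j (1:ℝ))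
      = ∑ j : Fin 3, (X i j) * ψ (Matrix.single i j 1) := by
    intro i; rw [hsum]; congr 1; ext j; rw [hsmul]
  simp only [this]
  simp [mdot_expand, Fin.sum_univ_three]
  ring

-- ===== minorant structure lemma =====
lemma minorant_key {f : M3 → ℝ} {A B : M3} {c e : ℝ} (hA : A.IsSymm) (hB : B.IsSymm)
    (h : ∀ F : M3, mdot A F + mdot B (cof F) + c * F.det + e ≤ f (symPart F)) :
    c = 0 ∧ NegSemidefM B := by
  have quad : ∀ (s : ℝ) (w : Fin 3 → ℝ),
      B.mulVec w ⬝ᵥ w + c * (s * (w 0^2 + w 1^2 + w 2^2)) ≤ 0 := by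
    intro s w
    have hq : ∀ t : ℝ, (B.mulVec w ⬝ᵥ w + c * (s * (w 0^2 + w 1^2 + w 2^2))) * t^2
        + (s * mdot A 1 + s^2 * mdot B 1 + c * s^3 + e) ≤ f (s • (1:M3)) := by
      intro t
      have heq : (B.mulVec w ⬝ᵥ w + c * (s * (w 0^2 + w 1^2 + w 2^2))) * t^2
          + (s * mdot A 1 + s^2 * mdot B 1 + c * s^3 + e)
          = mdot A (s • (1:M3) + skw (t • w)) + mdot B (cof (s • (1:M3) + skw (t • w)))
            + c * (s • (1:M3) + skw (t • w)).det + e := by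
        rw [cof_sI_skw, det_sI_skw, mdot_add_right A, mdot_skw_of_isSymm hA,
          mdot_add_right, mdot_add_right, mdot_smul_right B (s^2), mdot_smul_right B s,
          mdot_skw_of_isSymm hB, vmv_smul, mdot_smul_right B (t^2), mdot_vecMulVec,
          mdot_smul_right A s]
        simp only [Pi.smul_apply, smul_eq_mul]
        ring
      calc (B.mulVec w ⬝ᵥ w + c * (s * (w 0^2 + w 1^2 + w 2^2))) * t^2
            + (s * mdot A 1 + s^2 * mdot B 1 + c * s^3 + e)
          = mdot A (s • (1:M3) + skw (t • w)) + mdot B (cof (s • (1:M3) + skw (t • w)))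
            + c * (s • (1:M3) + skw (t • w)).det + e := heq
        _ ≤ f (symPart (s • (1:M3) + skw (t • w))) := h _
        _ = f (s • (1:M3)) := by rw [symPart_sI_skw]
    exact sl1 hq
  constructor
  · apply sl2 (b := B.mulVec ![1,0,0] ⬝ᵥ ![1,0,0])
    intro s
    have hq := quad s ![1,0,0]
    have hv : ((![1,0,0] : Fin 3 → ℝ) 0)^2 + ((![1,0,0] : Fin 3 → ℝ) 1)^2
        + ((![1,0,0] : Fin 3 → ℝ) 2)^2 = 1 := by norm_num; rfl
    rw [hv, mul_one] at hq
    linarith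
  · intro x
    have hq := quad 0 x
    simpa using hq

-- ===== the sup construction =====
def admSet (f : M3 → ℝ) : Set (M3 × M3 × ℝ) :=
  {q | q.1.IsSymm ∧ q.2.1.IsSymm ∧
    ∀ F : M3, mdot q.1 F + mdot q.2.1 (cof F) + q.2.2 ≤ f (symPart F)}

def aval (p : M3 × M3) (q : M3 × M3 × ℝ) : ℝ := mdot q.1 p.1 + mdot q.2.1 p.2 + q.2.2

noncomputable def gsup (f : M3 → ℝ) (p : M3 × M3) : ℝ := sSup (aval p '' admSet f)

lemma vals_bddAbove (f : M3 → ℝ) {ε η : M3} (h1 : ε.IsSymm) (h2 : η.IsSymm) :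
    BddAbove (aval (ε, η) '' admSet f) := by
  obtain ⟨t, ht1, htd⟩ := exists_pd (η - cof ε)
  set N := (η - cof ε) + t • (1:M3) with hN
  have hNsym : N.IsSymm := isSymm_add (isSymm_sub h2 (isSymm_cof h1))
    (isSymm_smul _ Matrix.isSymm_one)
  set σ' := (Real.sqrt N.det)⁻¹ • cof N with hσ'
  have hσsym : σ'.IsSymm := isSymm_smul _ (isSymm_cof hNsym)
  have hcofσ : cof σ' = N := by
    rw [hσ', cof_smul, cof_cof, smul_smul]
    have hu : ((Real.sqrt N.det)⁻¹)^2 * N.det = 1 := by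
      rw [inv_pow, Real.sq_sqrt htd.le]
      exact inv_mul_cancel₀ (ne_of_gt htd)
    rw [hu, one_smul]
  set r := Real.sqrt (6*t) with hrdef
  have hr : r^2 = 6*t := Real.sq_sqrt (by linarith)
  set s2 := Real.sqrt 2 with hs2def
  have hs : s2^2 = 2 := Real.sq_sqrt (by norm_num)
  refine ⟨(1/4)*(f (ε + s2 • σ') + f (ε - s2 • σ'))
    + (1/12)*((f (ε + r • TT 0) + f (ε - r • TT 0)) + (f (ε + r • TT 1) + f (ε - r • TT 1))
      + (f (ε + r • TT 2) + f (ε - r • TT 2))), ?_⟩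
  rintro y ⟨q, hq, rfl⟩
  obtain ⟨A, B, e⟩ := q
  obtain ⟨hAs, hBs, hcon⟩ := hq
  have pairsum : ∀ (Y : M3) (cc : ℝ), Y.IsSymm →
      2*mdot A ε + 2*mdot B (cof ε) + 2*cc^2*mdot B (cof Y) + 2*e
        ≤ f (ε + cc • Y) + f (ε - cc • Y) := by
    intro Y cc hY
    have hsp : (ε + cc • Y).IsSymm := isSymm_add h1 (isSymm_smul _ hY)
    have hsm : (ε - cc • Y).IsSymm := isSymm_sub h1 (isSymm_smul _ hY)
    have hp1 := hcon (ε + cc • Y)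
    rw [symPart_of_isSymm hsp] at hp1
    have hp2 := hcon (ε - cc • Y)
    rw [symPart_of_isSymm hsm] at hp2
    have hcofs : mdot B (cof (ε + cc • Y)) + mdot B (cof (ε - cc • Y))
        = 2*mdot B (cof ε) + 2*cc^2*mdot B (cof Y) := by
      rw [← mdot_add_right, cof_pair, mdot_add_right, mdot_smul_right, mdot_smul_right]
    have hA2 : mdot A (ε + cc • Y) + mdot A (ε - cc • Y) = 2*mdot A ε := by
      simp only [mdot_add_right, mdot_sub_right, mdot_smul_right]; ring
    linarith
  have P0 := pairsum σ' s2 hσsym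
  have P1 := pairsum (TT 0) r (TT_isSymm 0)
  have P2 := pairsum (TT 1) r (TT_isSymm 1)
  have P3 := pairsum (TT 2) r (TT_isSymm 2)
  rw [hs] at P0
  rw [hr] at P1 P2 P3
  have eq1 : mdot B (cof σ') = mdot B η - mdot B (cof ε) + t * mdot B 1 := by
    rw [hcofσ, hN]
    simp only [mdot_add_right, mdot_sub_right, mdot_smul_right]
  have eqsum : mdot B (cof (TT 0)) + mdot B (cof (TT 1)) + mdot B (cof (TT 2))
      = -(mdot B 1) := by
    rw [← mdot_add_right, ← mdot_add_right, sum_cof_TT, mdot_neg_right]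
  have eqsum_t : t*mdot B (cof (TT 0)) + t*mdot B (cof (TT 1)) + t*mdot B (cof (TT 2))
      = -(t*mdot B 1) := by linear_combination t * eqsum
  show mdot A ε + mdot B η + e ≤ _
  linarith [P0, P1, P2, P3, eq1, eqsum_t]

lemma vals_nonempty {f : M3 → ℝ} (hf : (admSet f).Nonempty) (p : M3 × M3) :
    (aval p '' admSet f).Nonempty := hf.image _

lemma adm_member_nsd {f : M3 → ℝ} {q : M3 × M3 × ℝ} (hq : q ∈ admSet f) :
    NegSemidefM q.2.1 := by
  obtain ⟨hAs, hBs, hcon⟩ := hq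
  refine (minorant_key (f := f) hAs hBs (c := 0) (e := q.2.2) ?_).2
  intro F
  have := hcon F
  linarith [this]

lemma exists_exact {f : M3 → ℝ} (hf : SymPolyconvex3 f) {ε : M3} (hε : ε.IsSymm) :
    ∃ q ∈ admSet f, aval (ε, cof ε) q = f ε := by
  obtain ⟨G, hGc, hGe⟩ := hf
  obtain ⟨φ, hφ⟩ := exists_subgrad hGc (ε, cof ε, ε.det)
  set A0 : M3 := Matrix.of fun i j => φ (Matrix.single i j 1, 0, 0) with hA0
  set B0 : M3 := Matrix.of fun i j => φ ((0:M3), Matrix.single i j 1, (0:ℝ)) with hB0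
  set c0 : ℝ := φ (0, 0, 1) with hc0def
  have hrep : ∀ (X H : M3) (d : ℝ), φ (X, H, d) = mdot A0 X + mdot B0 H + c0 * d := by
    intro X H d
    have hXsplit : ((X, H, d) : M3 × M3 × ℝ) = (X, 0, 0) + ((0:M3), H, (0:ℝ)) + (0, 0, d) := by
      simp [Prod.ext_iff]
    rw [hXsplit, map_add, map_add]
    have h1 : φ (X, 0, 0) = mdot A0 X := by
      refine lin_eq_mdot (fun Y => φ (Y, 0, 0)) ?_ ?_ X
      · intro U V
        show φ (U + V, 0, 0) = φ (U, 0, 0) + φ (V, 0, 0)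
        rw [show ((U + V, (0:M3), (0:ℝ)) : M3 × M3 × ℝ) = (U, 0, 0) + (V, 0, 0) by
          simp [Prod.ext_iff], map_add]
      · intro cc U
        show φ (cc • U, 0, 0) = cc * φ (U, 0, 0)
        rw [show ((cc • U, (0:M3), (0:ℝ)) : M3 × M3 × ℝ) = cc • (U, 0, 0) by
          simp [Prod.ext_iff], φ.map_smul, smul_eq_mul]
    have h2 : φ ((0:M3), H, (0:ℝ)) = mdot B0 H := by
      refine lin_eq_mdot (fun Y => φ ((0:M3), Y, (0:ℝ))) ?_ ?_ H
      · intro U V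
        show φ (0, U + V, 0) = φ (0, U, 0) + φ (0, V, 0)
        rw [show (((0:M3), U + V, (0:ℝ)) : M3 × M3 × ℝ) = (0, U, 0) + (0, V, 0) by
          simp [Prod.ext_iff], map_add]
      · intro cc U
        show φ (0, cc • U, 0) = cc * φ (0, U, 0)
        rw [show (((0:M3), cc • U, (0:ℝ)) : M3 × M3 × ℝ) = cc • ((0:M3), U, (0:ℝ)) by
          simp [Prod.ext_iff], φ.map_smul, smul_eq_mul]
    have h3 : φ ((0:M3), (0:M3), d) = c0 * d := by
      rw [show (((0:M3), (0:M3), d) : M3 × M3 × ℝ) = d • ((0:M3), (0:M3), (1:ℝ)) by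
        simp [Prod.ext_iff], φ.map_smul, smul_eq_mul, hc0def]
      ring
    rw [h1, h2, h3]
  set e0 : ℝ := G (ε, cof ε, ε.det) - φ (ε, cof ε, ε.det) with he0
  have hmin : ∀ F : M3, mdot A0 F + mdot B0 (cof F) + c0 * F.det + e0 ≤ f (symPart F) := by
    intro F
    have hx := hφ (F, cof F, F.det)
    rw [map_sub] at hx
    have hGF := hGe F
    simp only [] at hGF
    have hr1 := hrep F (cof F) F.det
    have hr2 := hrep ε (cof ε) ε.det
    linarith [hx, hr1, hr2, hGF]
  have hmin' : ∀ F : M3, mdot (symPart A0) F + mdot (symPart B0) (cof F) + c0 * F.det + e0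
      ≤ f (symPart F) := by
    intro F
    have ha1 := hmin F
    have ha2 := hmin Fᵀ
    rw [cof_transpose, Matrix.det_transpose, symPart_transpose, mdot_transpose A0,
      mdot_transpose B0] at ha2
    have hsA := mdot_symPart A0 F
    have hsB := mdot_symPart B0 (cof F)
    linarith
  obtain ⟨hc0z, _⟩ := minorant_key (symPart_isSymm A0) (symPart_isSymm B0) hmin'
  refine ⟨(symPart A0, symPart B0, e0), ⟨symPart_isSymm A0, symPart_isSymm B0, ?_⟩, ?_⟩
  · intro F
    have := hmin' F
    rw [hc0z] at this
    linarith
  · show mdot (symPart A0) ε + mdot (symPart B0) (cof ε) + e0 = f ε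
    have h1 : mdot (symPart A0) ε = mdot A0 ε := mdot_symPart_of_isSymm A0 hε
    have h2 : mdot (symPart B0) (cof ε) = mdot B0 (cof ε) :=
      mdot_symPart_of_isSymm B0 (isSymm_cof hε)
    have h3 := hrep ε (cof ε) ε.det
    have hGε := hGe ε
    simp only [] at hGε
    rw [symPart_of_isSymm hε] at hGε
    rw [hc0z] at h3
    rw [h1, h2]
    linarith [h3, hGε]

-- zero matrix is symmetric
lemma isSymm_zeroM : (0:M3).IsSymm := by
  unfold Matrix.IsSymm; exact Matrix.transpose_zero

-- ===== forward direction =====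
lemma forward_dir {f : M3 → ℝ} (hf : SymPolyconvex3 f) :
    ∃ g : M3 × M3 → ℝ,
      ConvexOn ℝ {p : M3 × M3 | p.1.IsSymm ∧ p.2.IsSymm} g ∧
      (∀ ε η : M3, ε.IsSymm → η.IsSymm →
        ∀ B : M3, B.IsSymm →
          (∀ η' : M3, η'.IsSymm → g (ε, η) + mdot B (η' - η) ≤ g (ε, η')) →
          NegSemidefM B) ∧
      (∀ ε : M3, ε.IsSymm → f ε = g (ε, cof ε)) := by
  have hne : (admSet f).Nonempty := by
    obtain ⟨q, hq, _⟩ := exists_exact hf isSymm_zeroM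
    exact ⟨q, hq⟩
  refine ⟨gsup f, ⟨?_, ?_⟩, ?_, ?_⟩
  · -- convexity of the domain
    intro p hp q hq a b ha hb hab
    exact ⟨isSymm_add (isSymm_smul _ hp.1) (isSymm_smul _ hq.1),
      isSymm_add (isSymm_smul _ hp.2) (isSymm_smul _ hq.2)⟩
  · -- convexity inequality
    intro p hp q hq a b ha hb hab
    have hbdd_p := vals_bddAbove f hp.1 hp.2
    have hbdd_q := vals_bddAbove f hq.1 hq.2
    apply csSup_le (vals_nonempty hne _)
    rintro y ⟨w, hw, rfl⟩
    have hvp : aval p w ≤ gsup f p := le_csSup (by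
      obtain ⟨p1, p2⟩ := p; exact hbdd_p) ⟨w, hw, rfl⟩
    have hvq : aval q w ≤ gsup f q := le_csSup (by
      obtain ⟨q1, q2⟩ := q; exact hbdd_q) ⟨w, hw, rfl⟩
    have hval : aval (a • p + b • q) w = a * aval p w + b * aval q w := by
      show mdot w.1 (a • p.1 + b • q.1) + mdot w.2.1 (a • p.2 + b • q.2) + w.2.2 = _
      rw [mdot_add_right, mdot_add_right, mdot_smul_right, mdot_smul_right,
        mdot_smul_right, mdot_smul_right]
      unfold aval
      linear_combination (-w.2.2) * hab
    rw [hval]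
    simp only [smul_eq_mul]
    exact add_le_add (mul_le_mul_of_nonneg_left hvp ha) (mul_le_mul_of_nonneg_left hvq hb)
  · -- NSD condition
    intro ε η hε hη Bh hBh hprem
    intro x
    have hη' : (η + vecMulVec x x).IsSymm := isSymm_add hη (isSymm_vecMulVec x)
    have h1 := hprem (η + vecMulVec x x) hη'
    have hmd : mdot Bh (η + vecMulVec x x - η) = Bh.mulVec x ⬝ᵥ x := by
      rw [show η + vecMulVec x x - η = vecMulVec x x from add_sub_cancel_left η _,
        mdot_vecMulVec]
    have h2 : gsup f (ε, η + vecMulVec x x) ≤ gsup f (ε, η) := by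
      apply csSup_le (vals_nonempty hne _)
      rintro y ⟨w, hw, rfl⟩
      have hwNSD := adm_member_nsd hw
      have hle : aval (ε, η + vecMulVec x x) w ≤ aval (ε, η) w := by
        show mdot w.1 ε + mdot w.2.1 (η + vecMulVec x x) + w.2.2 ≤ _
        rw [mdot_add_right, mdot_vecMulVec]
        unfold aval
        have := hwNSD x
        linarith
      exact le_trans hle (le_csSup (vals_bddAbove f hε hη) ⟨w, hw, rfl⟩)
    rw [hmd] at h1
    linarith
  · -- equality
    intro ε hε
    apply le_antisymm
    · obtain ⟨q, hq, hv⟩ := exists_exact hf hε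
      rw [← hv]
      exact le_csSup (vals_bddAbove f hε (isSymm_cof hε)) ⟨q, hq, rfl⟩
    · apply csSup_le (vals_nonempty hne _)
      rintro y ⟨w, hw, rfl⟩
      have := hw.2.2 ε
      rw [symPart_of_isSymm hε] at this
      exact this

-- ===== backward direction =====
lemma backward_dir {f : M3 → ℝ}
    (h : ∃ g : M3 × M3 → ℝ,
      ConvexOn ℝ {p : M3 × M3 | p.1.IsSymm ∧ p.2.IsSymm} g ∧
      (∀ ε η : M3, ε.IsSymm → η.IsSymm →
        ∀ B : M3, B.IsSymm →
          (∀ η' : M3, η'.IsSymm → g (ε, η) + mdot B (η' - η) ≤ g (ε, η')) →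
          NegSemidefM B) ∧
      (∀ ε : M3, ε.IsSymm → f ε = g (ε, cof ε))) :
    SymPolyconvex3 f := by
  obtain ⟨g, hgc, hgN, hgf⟩ := h
  have psub : ∀ ε ζ : M3, ε.IsSymm → ζ.IsSymm → ∃ B : M3, B.IsSymm ∧
      ∀ η' : M3, η'.IsSymm → g (ε, ζ) + mdot B (η' - ζ) ≤ g (ε, η') := by
    intro ε ζ hε hζ
    set gh : M3 × M3 → ℝ := fun p => g (symPart p.1, symPart p.2) with hgh
    have hconv : ConvexOn ℝ Set.univ gh := by
      refine ⟨convex_univ, ?_⟩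
      intro p _ q _ a b ha hb hab
      have h1 : gh (a • p + b • q)
          = g (a • (symPart p.1, symPart p.2) + b • (symPart q.1, symPart q.2)) := by
        show g (symPart (a • p + b • q).1, symPart (a • p + b • q).2) = _
        have e1 : (a • p + b • q).1 = a • p.1 + b • q.1 := rfl
        have e2 : (a • p + b • q).2 = a • p.2 + b • q.2 := rfl
        rw [e1, e2, symPart_linear, symPart_linear]
        rfl
      rw [h1]
      exact hgc.2 ⟨symPart_isSymm p.1, symPart_isSymm p.2⟩
        ⟨symPart_isSymm q.1, symPart_isSymm q.2⟩ ha hb hab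
    obtain ⟨φ, hφ⟩ := exists_subgrad hconv (ε, ζ)
    set B0 : M3 := Matrix.of fun i j => φ ((0:M3), Matrix.single i j 1) with hB0
    have hrep : ∀ Y : M3, φ ((0:M3), Y) = mdot B0 Y := by
      intro Y
      refine lin_eq_mdot (fun Y => φ ((0:M3), Y)) ?_ ?_ Y
      · intro U V
        show φ (0, U + V) = φ (0, U) + φ (0, V)
        rw [show (((0:M3), U + V) : M3 × M3) = (0, U) + (0, V) by simp [Prod.ext_iff], map_add]
      · intro cc U
        show φ (0, cc • U) = cc * φ (0, U)
        rw [show (((0:M3), cc • U) : M3 × M3) = cc • ((0:M3), U) by simp [Prod.ext_iff],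
          φ.map_smul, smul_eq_mul]
    refine ⟨symPart B0, symPart_isSymm B0, ?_⟩
    intro η' hη'
    have hx := hφ (ε, η')
    have hsubp : ((ε, η') : M3 × M3) - (ε, ζ) = ((0:M3), η' - ζ) := by
      simp [Prod.ext_iff]
    rw [hsubp, hrep] at hx
    have e1 : gh (ε, ζ) = g (ε, ζ) := by
      show g (symPart ε, symPart ζ) = _
      rw [symPart_of_isSymm hε, symPart_of_isSymm hζ]
    have e2 : gh (ε, η') = g (ε, η') := by
      show g (symPart ε, symPart η') = _
      rw [symPart_of_isSymm hε, symPart_of_isSymm hη']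
    rw [e1, e2] at hx
    rw [mdot_symPart_of_isSymm B0 (isSymm_sub hη' hζ)]
    exact hx
  have mono : ∀ (ε ζ : M3), ε.IsSymm → ζ.IsSymm → ∀ (c : ℝ), 0 ≤ c → ∀ v : Fin 3 → ℝ,
      g (ε, ζ + c • vecMulVec v v) ≤ g (ε, ζ) := by
    intro ε ζ hε hζ c hc v
    have hζ' : (ζ + c • vecMulVec v v).IsSymm :=
      isSymm_add hζ (isSymm_smul _ (isSymm_vecMulVec v))
    obtain ⟨B, hBsym, hBsub⟩ := psub ε (ζ + c • vecMulVec v v) hε hζ'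
    have hBN : NegSemidefM B := hgN ε (ζ + c • vecMulVec v v) hε hζ' B hBsym hBsub
    have hb := hBsub ζ hζ
    have e : ζ - (ζ + c • vecMulVec v v) = -(c • vecMulVec v v) := by
      rw [sub_add_eq_sub_sub, sub_self, zero_sub]
    rw [e, mdot_neg_right, mdot_smul_right, mdot_vecMulVec] at hb
    have hnn : 0 ≤ c * (-(B.mulVec v ⬝ᵥ v)) := mul_nonneg hc (by linarith [hBN v])
    nlinarith [hb, hnn]
  refine ⟨fun x => g (symPart x.1, symPart x.2.1 - vecMulVec (wv x.1) (wv x.1)),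
    ⟨convex_univ, ?_⟩, ?_⟩
  · intro x _ y _ a b ha hb hab
    have hb' : b = 1 - a := by linarith
    subst hb'
    have harg1 : symPart ((a • x + (1-a) • y).1) = a • symPart x.1 + (1-a) • symPart y.1 := by
      have e1 : (a • x + (1-a) • y).1 = a • x.1 + (1-a) • y.1 := rfl
      rw [e1, symPart_linear]
    have harg2 : symPart ((a • x + (1-a) • y).2.1)
          - vecMulVec (wv ((a • x + (1-a) • y).1)) (wv ((a • x + (1-a) • y).1))
        = (a • (symPart x.2.1 - vecMulVec (wv x.1) (wv x.1))
            + (1-a) • (symPart y.2.1 - vecMulVec (wv y.1) (wv y.1)))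
          + (a*(1-a)) • vecMulVec (wv x.1 - wv y.1) (wv x.1 - wv y.1) := by
      have e1 : (a • x + (1-a) • y).2.1 = a • x.2.1 + (1-a) • y.2.1 := rfl
      have e2 : (a • x + (1-a) • y).1 = a • x.1 + (1-a) • y.1 := rfl
      rw [e1, e2, symPart_linear, wv_linear, vmv_combo]
      ext i j
      simp only [Matrix.add_apply, Matrix.sub_apply, Matrix.smul_apply, smul_eq_mul]
      ring
    have hsym1 : (a • symPart x.1 + (1-a) • symPart y.1).IsSymm :=
      isSymm_add (isSymm_smul _ (symPart_isSymm _)) (isSymm_smul _ (symPart_isSymm _))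
    have hsym2 : ((a • (symPart x.2.1 - vecMulVec (wv x.1) (wv x.1))
        + (1-a) • (symPart y.2.1 - vecMulVec (wv y.1) (wv y.1)))).IsSymm :=
      isSymm_add (isSymm_smul _ (isSymm_sub (symPart_isSymm _) (isSymm_vecMulVec _)))
        (isSymm_smul _ (isSymm_sub (symPart_isSymm _) (isSymm_vecMulVec _)))
    calc g (symPart ((a • x + (1-a) • y).1),
            symPart ((a • x + (1-a) • y).2.1)
              - vecMulVec (wv ((a • x + (1-a) • y).1)) (wv ((a • x + (1-a) • y).1)))
        = g (a • symPart x.1 + (1-a) • symPart y.1,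
            (a • (symPart x.2.1 - vecMulVec (wv x.1) (wv x.1))
              + (1-a) • (symPart y.2.1 - vecMulVec (wv y.1) (wv y.1)))
            + (a*(1-a)) • vecMulVec (wv x.1 - wv y.1) (wv x.1 - wv y.1)) := by
          rw [harg1, harg2]
      _ ≤ g (a • symPart x.1 + (1-a) • symPart y.1,
            a • (symPart x.2.1 - vecMulVec (wv x.1) (wv x.1))
              + (1-a) • (symPart y.2.1 - vecMulVec (wv y.1) (wv y.1))) :=
          mono _ _ hsym1 hsym2 (a*(1-a)) (mul_nonneg ha (by linarith)) _
      _ = g (a • ((symPart x.1, symPart x.2.1 - vecMulVec (wv x.1) (wv x.1)) : M3 × M3)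
            + (1-a) • ((symPart y.1, symPart y.2.1 - vecMulVec (wv y.1) (wv y.1)) : M3 × M3)) :=
          rfl
      _ ≤ a • g (symPart x.1, symPart x.2.1 - vecMulVec (wv x.1) (wv x.1))
            + (1-a) • g (symPart y.1, symPart y.2.1 - vecMulVec (wv y.1) (wv y.1)) :=
          hgc.2 ⟨symPart_isSymm _, isSymm_sub (symPart_isSymm _) (isSymm_vecMulVec _)⟩
            ⟨symPart_isSymm _, isSymm_sub (symPart_isSymm _) (isSymm_vecMulVec _)⟩ ha hb hab
  · intro F
    show f (symPart F) = g (symPart F, symPart (cof F) - vecMulVec (wv F) (wv F))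
    rw [← cof_symPart]
    exact hgf (symPart F) (symPart_isSymm F)

/-- Characterization of symmetric polyconvexity in 3d. -/
theorem symmetric_polyconvexity_char_3d (f : Matrix (Fin 3) (Fin 3) ℝ → ℝ) :
    SymPolyconvex3 f ↔
      ∃ g : Matrix (Fin 3) (Fin 3) ℝ × Matrix (Fin 3) (Fin 3) ℝ → ℝ,
        ConvexOn ℝ {p : Matrix (Fin 3) (Fin 3) ℝ × Matrix (Fin 3) (Fin 3) ℝ |
          p.1.IsSymm ∧ p.2.IsSymm} g ∧
        (∀ ε η : Matrix (Fin 3) (Fin 3) ℝ, ε.IsSymm → η.IsSymm →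
          ∀ B : Matrix (Fin 3) (Fin 3) ℝ, B.IsSymm →
            (∀ η' : Matrix (Fin 3) (Fin 3) ℝ, η'.IsSymm →
              g (ε, η) + mdot B (η' - η) ≤ g (ε, η')) →
            NegSemidefM B) ∧
        (∀ ε : Matrix (Fin 3) (Fin 3) ℝ, ε.IsSymm → f ε = g (ε, cof ε)) := by
  constructor
  · exact forward_dir
  · exact backward_dir
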